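/- Dimension of homogeneous biharmonic polynomials (Lemma 3.8, part 2): For every integer n ≥ 1 and every integer d ≥ 0, let B_d^n be the kernel of the linear map ΔΔ : A_d^n → A_{d−4}^n. Then dim B_d^n = dim A_d^n − dim A_{d−4}^n (where dim A_j^n = 0 for j < 0). -/

import Mathlib

noncomputable section

open MvPolynomial

/-- The polynomial Laplacian `Δp = ∑ i, ∂²p/∂x_i²` on `MvPolynomial (Fin n) ℝ`. -/
def polyLap (n : ℕ) : MvPolynomial (Fin n) ℝ →ₗ[ℝ] MvPolynomial (Fin n) ℝ :=
  ∑ i : Fin n, ((pderiv i).toLinearMap ∘ₗ (pderiv i).toLinearMap)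

/-- `dim A_j^n` for `j : ℤ`, with `dim A_j^n = 0` for `j < 0`. -/
def dimA (n : ℕ) (j : ℤ) : ℕ :=
  if 0 ≤ j then Module.finrank ℝ ↥(homogeneousSubmodule (Fin n) ℝ j.toNat) else 0

lemma Finsupp.degree_single' {σ : Type*} (i : σ) (k : ℕ) :
    Finsupp.degree (Finsupp.single i k) = k := by
  simp [Finsupp.degree_eq_weight_one, Finsupp.weight_apply, Finsupp.sum_single_index]

lemma Finsupp.degree_add' {σ : Type*} (f g : σ →₀ ℕ) :
    Finsupp.degree (f + g) = Finsupp.degree f + Finsupp.degree g := by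
  simp [Finsupp.degree_eq_weight_one, map_add]

lemma isHomogeneous_pderiv {n : ℕ} {p : MvPolynomial (Fin n) ℝ} {m : ℕ}
    (hp : p.IsHomogeneous m) (i : Fin n) : (pderiv i p).IsHomogeneous (m - 1) := by
  conv_lhs => rw [p.as_sum]
  rw [map_sum]
  apply IsHomogeneous.sum
  intro s hs
  rw [pderiv_monomial]
  by_cases h : s i = 0
  · rw [h]
    simp only [Nat.cast_zero, mul_zero, map_zero]
    exact isHomogeneous_zero _ _ _
  · apply isHomogeneous_monomial
    have hd : Finsupp.degree s = m := by
      have := hp (MvPolynomial.mem_support_iff.mp hs)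
      rwa [Finsupp.degree_eq_weight_one]
    have hle : Finsupp.single i 1 ≤ s := Finsupp.single_le_iff.mpr (Nat.one_le_iff_ne_zero.mpr h)
    have hadd : (s - Finsupp.single i 1) + Finsupp.single i 1 = s := tsub_add_cancel_of_le hle
    have := congrArg Finsupp.degree hadd
    rw [Finsupp.degree_add', Finsupp.degree_single', hd] at this
    omega

lemma pderiv_eq_zero_of_isHomogeneous_zero {n : ℕ} {p : MvPolynomial (Fin n) ℝ}
    (hp : p.IsHomogeneous 0) (i : Fin n) : pderiv i p = 0 := by
  have h0 : p.totalDegree = 0 := (totalDegree_zero_iff_isHomogeneous _).mpr hp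
  rw [totalDegree_eq_zero_iff] at h0
  have : p = C (coeff 0 p) := by
    ext m
    by_cases hm : m ∈ p.support
    · have : m = 0 := by ext x; exact h0 m hm x
      subst this; simp
    · rw [MvPolynomial.notMem_support_iff] at hm
      rw [hm, coeff_C]
      by_cases h0m : (0 : Fin n →₀ ℕ) = m
      · subst h0m; simp_all
      · simp [h0m]
  rw [this, pderiv_C]

lemma polyLap_apply {n : ℕ} (p : MvPolynomial (Fin n) ℝ) :
    polyLap n p = ∑ i : Fin n, pderiv i (pderiv i p) := by
  simp [polyLap]

lemma isHomogeneous_polyLap {n : ℕ} {p : MvPolynomial (Fin n) ℝ} {m : ℕ}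
    (hp : p.IsHomogeneous m) : (polyLap n p).IsHomogeneous (m - 2) := by
  rw [polyLap_apply]
  apply IsHomogeneous.sum
  intro i _
  have := isHomogeneous_pderiv (isHomogeneous_pderiv hp i) i
  rwa [show m - 1 - 1 = m - 2 by omega] at this

lemma polyLap_monomial {n : ℕ} (t : Fin n →₀ ℕ) (c : ℝ) :
    polyLap n (monomial t c) =
      ∑ j : Fin n, monomial (t - Finsupp.single j 1 - Finsupp.single j 1)
        (c * t j * ((t - Finsupp.single j 1 : Fin n →₀ ℕ) j)) := by
  rw [polyLap_apply]
  refine Finset.sum_congr rfl fun j _ => ?_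
  rw [pderiv_monomial, pderiv_monomial]

lemma sub_two_single {n : ℕ} (t : Fin n →₀ ℕ) (j : Fin n) :
    t - Finsupp.single j 1 - Finsupp.single j 1 = t - Finsupp.single j 2 := by
  rw [tsub_tsub, ← Finsupp.single_add]

lemma monomial_mem_map (n d : ℕ) (hn : 1 ≤ n) :
    ∀ (k : ℕ) (s : Fin n →₀ ℕ), Finsupp.degree s = d → d ≤ s ⟨0, Nat.lt_of_lt_of_le Nat.zero_lt_one hn⟩ + k →
      (monomial s (1 : ℝ)) ∈
        Submodule.map (polyLap n) (homogeneousSubmodule (Fin n) ℝ (d + 2)) := by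
  set i0 : Fin n := ⟨0, Nat.lt_of_lt_of_le Nat.zero_lt_one hn⟩ with hi0
  intro k
  induction k using Nat.strong_induction_on with
  | _ k ih =>
  intro s hdeg hbound
  set a : ℕ := s i0 with ha
  set t : Fin n →₀ ℕ := s + Finsupp.single i0 2 with ht
  have hti0 : t i0 = a + 2 := by simp [ht, ha]
  have hdegt : Finsupp.degree t = d + 2 := by
    rw [ht, Finsupp.degree_add', Finsupp.degree_single', hdeg]
  set c : ℝ := ((a : ℝ) + 2)⁻¹ * ((a : ℝ) + 1)⁻¹ with hc
  set p0 : MvPolynomial (Fin n) ℝ := monomial t c with hp0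
  have hp0mem : p0 ∈ homogeneousSubmodule (Fin n) ℝ (d + 2) :=
    isHomogeneous_monomial _ hdegt
  have hlap : polyLap n p0 = monomial s 1 +
      ∑ j ∈ Finset.univ.erase i0, monomial (t - Finsupp.single j 1 - Finsupp.single j 1)
        (c * t j * ((t - Finsupp.single j 1 : Fin n →₀ ℕ) j)) := by
    rw [hp0, polyLap_monomial, ← Finset.add_sum_erase _ _ (Finset.mem_univ i0)]
    congr 1
    have h1 : t - Finsupp.single i0 1 - Finsupp.single i0 1 = s := by
      rw [sub_two_single, ht, add_tsub_cancel_right]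
    have h2 : (t - Finsupp.single i0 1 : Fin n →₀ ℕ) i0 = a + 1 := by
      rw [Finsupp.tsub_apply, hti0, Finsupp.single_eq_same]
      omega
    rw [h1, h2, hti0]
    congr 1
    have h2' : (a : ℝ) + 2 ≠ 0 := by positivity
    have h1' : (a : ℝ) + 1 ≠ 0 := by positivity
    rw [hc]
    push_cast
    field_simp
  have hrem : ∀ j ∈ Finset.univ.erase i0,
      monomial (t - Finsupp.single j 1 - Finsupp.single j 1)
        (c * t j * ((t - Finsupp.single j 1 : Fin n →₀ ℕ) j)) ∈
      Submodule.map (polyLap n) (homogeneousSubmodule (Fin n) ℝ (d + 2)) := by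
    intro j hj
    have hji0 : j ≠ i0 := Finset.ne_of_mem_erase hj
    have htj : t j = s j := by
      rw [ht]; simp [Finsupp.single_eq_of_ne' (Ne.symm hji0)]
    by_cases hsj : s j ≤ 1
    · have hcoef : c * (t j : ℝ) * (((t - Finsupp.single j 1 : Fin n →₀ ℕ) j : ℕ) : ℝ) = 0 := by
        rw [Finsupp.tsub_apply, Finsupp.single_eq_same, htj, mul_assoc]
        have : ((s j : ℝ)) * (((s j - 1 : ℕ) : ℝ)) = 0 := by
          have h01 : s j = 0 ∨ s j = 1 := by omega
          rcases h01 with h | h <;> simp [h]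
        rw [this, mul_zero]
      rw [hcoef, map_zero]
      exact Submodule.zero_mem _
    · push_neg at hsj
      have hle2 : Finsupp.single j 2 ≤ t := by
        rw [Finsupp.single_le_iff, htj]; omega
      set u : Fin n →₀ ℕ := t - Finsupp.single j 2 with hu
      have hadd : u + Finsupp.single j 2 = t := tsub_add_cancel_of_le hle2
      have hdegu : Finsupp.degree u = d := by
        have := congrArg Finsupp.degree hadd
        rw [Finsupp.degree_add', Finsupp.degree_single', hdegt] at this
        omega
      have hui0 : u i0 = a + 2 := by
        rw [hu, Finsupp.tsub_apply, hti0, Finsupp.single_eq_of_ne' hji0]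
        omega
      have hk1 : 1 ≤ k := by
        by_contra hk
        push_neg at hk
        interval_cases k
        have := Finsupp.le_degree i0 u
        rw [hui0, hdegu] at this
        omega
      have hmem : monomial u (1 : ℝ) ∈
          Submodule.map (polyLap n) (homogeneousSubmodule (Fin n) ℝ (d + 2)) := by
        apply ih (k - 1) (by omega) u hdegu
        rw [hui0]; omega
      have heq : monomial (t - Finsupp.single j 1 - Finsupp.single j 1)
          (c * t j * ((t - Finsupp.single j 1 : Fin n →₀ ℕ) j)) =
          (c * t j * ((t - Finsupp.single j 1 : Fin n →₀ ℕ) j)) • monomial u (1 : ℝ) := by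
        rw [sub_two_single, ← hu, MvPolynomial.smul_monomial, smul_eq_mul, mul_one]
      rw [heq]
      exact Submodule.smul_mem _ _ hmem
  have hsum : (∑ j ∈ Finset.univ.erase i0,
      monomial (t - Finsupp.single j 1 - Finsupp.single j 1)
        (c * t j * ((t - Finsupp.single j 1 : Fin n →₀ ℕ) j))) ∈
      Submodule.map (polyLap n) (homogeneousSubmodule (Fin n) ℝ (d + 2)) :=
    Submodule.sum_mem _ hrem
  have hlapmem : polyLap n p0 ∈
      Submodule.map (polyLap n) (homogeneousSubmodule (Fin n) ℝ (d + 2)) :=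
    Submodule.mem_map_of_mem hp0mem
  have : monomial s (1 : ℝ) = polyLap n p0 - ∑ j ∈ Finset.univ.erase i0,
      monomial (t - Finsupp.single j 1 - Finsupp.single j 1)
        (c * t j * ((t - Finsupp.single j 1 : Fin n →₀ ℕ) j)) := by
    rw [hlap]; ring
  rw [this]
  exact Submodule.sub_mem _ hlapmem hsum

lemma polyLap_surj {n : ℕ} (hn : 1 ≤ n) (d : ℕ) {q : MvPolynomial (Fin n) ℝ}
    (hq : q.IsHomogeneous d) :
    ∃ p : MvPolynomial (Fin n) ℝ, p.IsHomogeneous (d + 2) ∧ polyLap n p = q := by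
  have hmem : q ∈ Submodule.map (polyLap n) (homogeneousSubmodule (Fin n) ℝ (d + 2)) := by
    nth_rewrite 1 [q.as_sum]
    apply Submodule.sum_mem
    intro s hs
    have hcs : monomial s (coeff s q) = (coeff s q) • monomial s (1 : ℝ) := by
      rw [MvPolynomial.smul_monomial, smul_eq_mul, mul_one]
    rw [hcs]
    apply Submodule.smul_mem
    have hdeg : Finsupp.degree s = d := by
      have := hq (MvPolynomial.mem_support_iff.mp hs)
      rwa [Finsupp.degree_eq_weight_one]
    exact monomial_mem_map n d hn d s hdeg (by omega)
  obtain ⟨p, hp, hpq⟩ := hmem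
  exact ⟨p, hp, hpq⟩

lemma polyLapLap_surj {n : ℕ} (hn : 1 ≤ n) (d : ℕ) {q : MvPolynomial (Fin n) ℝ}
    (hq : q.IsHomogeneous d) :
    ∃ p : MvPolynomial (Fin n) ℝ, p.IsHomogeneous (d + 4) ∧ polyLap n (polyLap n p) = q := by
  obtain ⟨p1, hp1, hp1q⟩ := polyLap_surj hn d hq
  obtain ⟨p2, hp2, hp2q⟩ := polyLap_surj hn (d + 2) hp1
  refine ⟨p2, by rwa [show d + 2 + 2 = d + 4 by omega] at hp2, by rw [hp2q, hp1q]⟩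

/-- **Dimension of homogeneous biharmonic polynomials** (Lemma 3.8, part 2):
`dim B_d^n = dim A_d^n − dim A_{d−4}^n`. -/
theorem dim_homogeneous_biharmonic (n : ℕ) (hn : 1 ≤ n) (d : ℕ) :
    Module.finrank ℝ
        ↥(homogeneousSubmodule (Fin n) ℝ d ⊓ LinearMap.ker (polyLap n ∘ₗ polyLap n)) =
      Module.finrank ℝ ↥(homogeneousSubmodule (Fin n) ℝ d) - dimA n ((d : ℤ) - 4) := by
  classical
  set A : Submodule ℝ (MvPolynomial (Fin n) ℝ) := homogeneousSubmodule (Fin n) ℝ d with hA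
  haveI : FiniteDimensional ℝ A := by
    apply Submodule.finiteDimensional_of_le (S₂ := restrictTotalDegree (Fin n) ℝ d)
    intro p hp
    rw [mem_restrictTotalDegree]
    exact IsHomogeneous.totalDegree_le hp
  by_cases hd : 4 ≤ d
  · -- case d ≥ 4
    set B : Submodule ℝ (MvPolynomial (Fin n) ℝ) := homogeneousSubmodule (Fin n) ℝ (d - 4) with hB
    have hdimA : dimA n ((d : ℤ) - 4) = Module.finrank ℝ B := by
      have htn : ((d : ℤ) - 4).toNat = d - 4 := by omega
      rw [dimA, if_pos (by omega), htn]
    haveI : FiniteDimensional ℝ B := by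
      apply Submodule.finiteDimensional_of_le (S₂ := restrictTotalDegree (Fin n) ℝ (d - 4))
      intro p hp
      rw [mem_restrictTotalDegree]
      exact IsHomogeneous.totalDegree_le hp
    have hmaps : ∀ x ∈ A, (polyLap n ∘ₗ polyLap n) x ∈ B := by
      intro x hx
      have h1 := isHomogeneous_polyLap (isHomogeneous_polyLap (n := n) hx)
      rw [show d - 2 - 2 = d - 4 by omega] at h1
      exact h1
    set f : A →ₗ[ℝ] B := (polyLap n ∘ₗ polyLap n).restrict hmaps with hf
    have hsurj : Function.Surjective f := by
      rintro ⟨q, hq⟩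
      obtain ⟨p, hp, hpq⟩ := polyLapLap_surj hn (d - 4) hq
      rw [show d - 4 + 4 = d by omega] at hp
      refine ⟨⟨p, hp⟩, ?_⟩
      apply Subtype.ext
      simpa [hf, LinearMap.restrict_apply] using hpq
    have hrank := LinearMap.finrank_range_add_finrank_ker f
    have hrange : Module.finrank ℝ (LinearMap.range f) = Module.finrank ℝ B := by
      rw [LinearMap.range_eq_top.mpr hsurj, finrank_top]
    have hker : Module.finrank ℝ (LinearMap.ker f) =
        Module.finrank ℝ ↥(A ⊓ LinearMap.ker (polyLap n ∘ₗ polyLap n)) := by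
      have hker_eq : LinearMap.ker f =
          (A ⊓ LinearMap.ker (polyLap n ∘ₗ polyLap n)).comap A.subtype := by
        rw [hf, LinearMap.ker_restrict, Submodule.comap_inf]
        simp [Submodule.comap_subtype_self]
      rw [hker_eq]
      exact (Submodule.comapSubtypeEquivOfLe inf_le_left).finrank_eq
    rw [← hker, hdimA, ← hrange]
    omega
  · -- case d ≤ 3
    push_neg at hd
    have hzero : ∀ p ∈ A, (polyLap n ∘ₗ polyLap n) p = 0 := by
      intro p hp
      have h4 : ∀ (i j : Fin n) (x : MvPolynomial (Fin n) ℝ), x.IsHomogeneous d →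
          pderiv i (pderiv i (pderiv j (pderiv j x))) = 0 := by
        intro i j x hx
        have h1 := isHomogeneous_pderiv hx j
        have h2 := isHomogeneous_pderiv h1 j
        have h3 := isHomogeneous_pderiv h2 i
        rw [show d - 1 - 1 - 1 = 0 by omega] at h3
        exact pderiv_eq_zero_of_isHomogeneous_zero h3 i
      have hLL : (polyLap n ∘ₗ polyLap n) p = ∑ j : Fin n, ∑ i : Fin n,
          pderiv i (pderiv i (pderiv j (pderiv j p))) := by
        simp only [LinearMap.comp_apply, polyLap_apply, map_sum]
      rw [hLL]
      apply Finset.sum_eq_zero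
      intro j _
      apply Finset.sum_eq_zero
      intro i _
      exact h4 i j p hp
    have hinf : A ⊓ LinearMap.ker (polyLap n ∘ₗ polyLap n) = A := by
      rw [inf_eq_left]
      intro p hp
      exact LinearMap.mem_ker.mpr (hzero p hp)
    have hdimA4 : dimA n ((d : ℤ) - 4) = 0 := by
      rw [dimA, if_neg (by omega)]
    rw [hinf, hdimA4]
    omega
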